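/- Let M be a measurement assemblage in dimension d with m settings and o outcomes and let p be a weighting. Then IF⋄(M,p) ≥ C⋄(M,p) ≥ I⋄(M,p), i.e., the informativeness dominates the coherence, which dominates the incompatibility. -/

import Mathlib

open Matrix Kronecker BigOperators ComplexOrder

noncomputable section

def IsDensityMatrix {n : Type*} [Fintype n] [DecidableEq n] (ρ : Matrix n n ℂ) : Prop :=
  ρ.PosSemidef ∧ ρ.trace = 1

noncomputable def traceNorm {n : Type*} [Fintype n] [DecidableEq n] (X : Matrix n n ℂ) : ℝ :=
  (((Matrix.posSemidef_conjTranspose_mul_self X).1.eigenvectorUnitary : Matrix n n ℂ) *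
    diagonal ((fun r : ℝ => (r : ℂ)) ∘ Real.sqrt ∘ (Matrix.posSemidef_conjTranspose_mul_self X).1.eigenvalues) *
    (star (Matrix.posSemidef_conjTranspose_mul_self X).1.eigenvectorUnitary : Matrix n n ℂ)).trace.re

noncomputable def specNorm {n : Type*} [Fintype n] [DecidableEq n] (X : Matrix n n ℂ) : ℝ :=
  ‖Matrix.toEuclideanCLM (𝕜 := ℂ) X‖

def ptrace1 {n e : Type*} [Fintype n] (ρ : Matrix (n × e) (n × e) ℂ) : Matrix e e ℂ :=
  Matrix.of fun j j' => ∑ i, ρ (i, j) (i, j')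

def IsAssemblage {d m o : ℕ} (M : Fin m → Fin o → Matrix (Fin d) (Fin d) ℂ) : Prop :=
  (∀ x a, (M x a).PosSemidef) ∧ ∀ x, ∑ a, M x a = 1

def IsWeighting {m : ℕ} (p : Fin m → ℝ) : Prop :=
  (∀ x, 0 < p x) ∧ ∑ x, p x = 1

noncomputable def Ddiamond {d m o : ℕ} (p : Fin m → ℝ)
    (M N : Fin m → Fin o → Matrix (Fin d) (Fin d) ℂ) : ℝ :=
  (1 / 2) * ∑ x, p x *
    ⨆ ρ : {ρ : Matrix (Fin d × Fin d) (Fin d × Fin d) ℂ // IsDensityMatrix ρ},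
      ∑ a, traceNorm (ptrace1 (((M x a - N x a) ⊗ₖ (1 : Matrix (Fin d) (Fin d) ℂ)) * ρ.1))

def JointlyMeasurable {d m o : ℕ} (F : Fin m → Fin o → Matrix (Fin d) (Fin d) ℂ) : Prop :=
  ∃ G : (Fin m → Fin o) → Matrix (Fin d) (Fin d) ℂ,
    (∀ lam, (G lam).PosSemidef) ∧ (∑ lam, G lam = 1) ∧
    ∀ x a, F x a = ∑ lam ∈ Finset.univ.filter (fun lam => lam x = a), G lam

noncomputable def Incomp {d m o : ℕ} (p : Fin m → ℝ)
    (M : Fin m → Fin o → Matrix (Fin d) (Fin d) ℂ) : ℝ :=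
  ⨅ F : {F : Fin m → Fin o → Matrix (Fin d) (Fin d) ℂ // IsAssemblage F ∧ JointlyMeasurable F},
    Ddiamond p M F.1


def IsUninformative {d m o : ℕ} (F : Fin m → Fin o → Matrix (Fin d) (Fin d) ℂ) : Prop :=
  ∃ q : Fin m → Fin o → ℝ, (∀ x a, 0 ≤ q x a) ∧ (∀ x, ∑ a, q x a = 1) ∧
    ∀ x a, F x a = q x a • (1 : Matrix (Fin d) (Fin d) ℂ)

def IsIncoherent {d m o : ℕ} (F : Fin m → Fin o → Matrix (Fin d) (Fin d) ℂ) : Prop :=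
  ∀ x a, (F x a).IsDiag

noncomputable def Informativeness {d m o : ℕ} (p : Fin m → ℝ)
    (M : Fin m → Fin o → Matrix (Fin d) (Fin d) ℂ) : ℝ :=
  ⨅ F : {F : Fin m → Fin o → Matrix (Fin d) (Fin d) ℂ // IsAssemblage F ∧ IsUninformative F},
    Ddiamond p M F.1

noncomputable def Coherence {d m o : ℕ} (p : Fin m → ℝ)
    (M : Fin m → Fin o → Matrix (Fin d) (Fin d) ℂ) : ℝ :=
  ⨅ F : {F : Fin m → Fin o → Matrix (Fin d) (Fin d) ℂ // IsAssemblage F ∧ IsIncoherent F},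
    Ddiamond p M F.1

/-! ### Auxiliary lemmas -/

lemma psd_diag_nonneg {n : Type*} [Fintype n] [DecidableEq n] {A : Matrix n n ℂ}
    (hA : A.PosSemidef) (i : n) : 0 ≤ A i i := by
  exact hA.diag_nonneg

lemma traceNorm_nonneg' {n : Type*} [Fintype n] [DecidableEq n] (X : Matrix n n ℂ) :
    0 ≤ traceNorm X := by
  have hD : (diagonal ((fun r : ℝ => (r : ℂ)) ∘ Real.sqrt ∘
      (Matrix.posSemidef_conjTranspose_mul_self X).1.eigenvalues)).PosSemidef :=
    Matrix.posSemidef_diagonal_iff.mpr fun i => Complex.zero_le_real.mpr (Real.sqrt_nonneg _)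
  have h2 := (hD.mul_mul_conjTranspose_same
    ((Matrix.posSemidef_conjTranspose_mul_self X).1.eigenvectorUnitary : Matrix n n ℂ)).trace_nonneg
  have h3 := (Complex.le_def.mp h2).1
  simp only [Complex.zero_re] at h3
  exact h3

lemma Ddiamond_nonneg {d m o : ℕ} (p : Fin m → ℝ) (hp : ∀ x, 0 ≤ p x)
    (M N : Fin m → Fin o → Matrix (Fin d) (Fin d) ℂ) : 0 ≤ Ddiamond p M N := by
  unfold Ddiamond
  refine mul_nonneg (by norm_num) (Finset.sum_nonneg fun x _ => mul_nonneg (hp x) ?_)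
  exact Real.iSup_nonneg fun ρ => Finset.sum_nonneg fun a _ => traceNorm_nonneg' _

lemma bdd_Ddiamond {d m o : ℕ} (p : Fin m → ℝ) (hp : ∀ x, 0 ≤ p x)
    (M : Fin m → Fin o → Matrix (Fin d) (Fin d) ℂ)
    (P : (Fin m → Fin o → Matrix (Fin d) (Fin d) ℂ) → Prop) :
    BddBelow (Set.range fun F : {F // P F} => Ddiamond p M F.1) := by
  refine ⟨0, ?_⟩
  rintro r ⟨F, rfl⟩
  exact Ddiamond_nonneg p hp M F.1

lemma incoh_of_uninf {d m o : ℕ} {F : Fin m → Fin o → Matrix (Fin d) (Fin d) ℂ}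
    (h : IsUninformative F) : IsIncoherent F := by
  obtain ⟨q, _, _, hF⟩ := h
  intro x a
  rw [hF]
  exact Matrix.isDiag_one.smul _

lemma smul_one_eq_diagonal' {d : ℕ} (q : ℝ) :
    (q • (1 : Matrix (Fin d) (Fin d) ℂ)) = Matrix.diagonal (fun _ => (q:ℂ)) := by
  ext i j
  by_cases h : i = j <;>
    simp [h, Matrix.one_apply, Matrix.diagonal_apply, Complex.real_smul]

lemma uniform_assemblage {d m o : ℕ} (ho : 0 < o) :
    IsAssemblage (fun (_ : Fin m) (_ : Fin o) => ((o:ℝ)⁻¹) • (1 : Matrix (Fin d) (Fin d) ℂ)) := by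
  constructor
  · intro x a
    rw [smul_one_eq_diagonal']
    exact Matrix.posSemidef_diagonal_iff.mpr fun i => by
      rw [Complex.zero_le_real]; positivity
  · intro x
    rw [Finset.sum_const, Finset.card_univ, Fintype.card_fin,
      ← Nat.cast_smul_eq_nsmul ℝ, smul_smul,
      mul_inv_cancel₀ (Nat.cast_ne_zero.mpr ho.ne'), one_smul]

lemma d_eq_zero_of_o_zero {d m : ℕ} {M : Fin m → Fin 0 → Matrix (Fin d) (Fin d) ℂ}
    (hM : IsAssemblage M) (hm : 0 < m) : d = 0 := by
  by_contra h
  have h1 := hM.2 ⟨0, hm⟩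
  rw [Finset.univ_eq_empty, Finset.sum_empty] at h1
  have h2 := congrFun (congrFun h1 ⟨0, Nat.pos_of_ne_zero h⟩) ⟨0, Nat.pos_of_ne_zero h⟩
  simp [Matrix.one_apply] at h2

lemma exists_incoherent {d m o : ℕ} {M : Fin m → Fin o → Matrix (Fin d) (Fin d) ℂ}
    (hM : IsAssemblage M) :
    Nonempty {F : Fin m → Fin o → Matrix (Fin d) (Fin d) ℂ // IsAssemblage F ∧ IsIncoherent F} := by
  rcases Nat.eq_zero_or_pos o with ho | ho
  · rcases Nat.eq_zero_or_pos m with hm | hm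
    · subst hm
      exact ⟨M, hM, fun x => x.elim0⟩
    · subst ho
      have hd := d_eq_zero_of_o_zero hM hm
      subst hd
      exact ⟨M, hM, fun x a i j _ => i.elim0⟩
  · exact ⟨fun _ _ => ((o:ℝ)⁻¹) • 1, uniform_assemblage ho,
      fun x a => Matrix.isDiag_one.smul _⟩

lemma scalar_marg {m o : ℕ} (g : Fin m → Fin o → ℂ)
    (hg : ∀ y, ∑ b, g y b = 1) (x : Fin m) (a : Fin o) :
    ∑ lam ∈ Finset.univ.filter (fun lam : Fin m → Fin o => lam x = a),
      ∏ y, g y (lam y) = g x a := by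
  set h : Fin m → Fin o → ℂ := fun y b => if y = x then (if b = a then g y b else 0) else g y b
    with hh
  have key : ∑ lam : Fin m → Fin o, ∏ y, h y (lam y)
      = ∑ lam ∈ Finset.univ.filter (fun lam : Fin m → Fin o => lam x = a),
          ∏ y, g y (lam y) := by
    rw [← Finset.sum_filter_add_sum_filter_not Finset.univ
      (fun lam : Fin m → Fin o => lam x = a)]
    have h2 : ∑ lam ∈ Finset.univ.filter (fun lam : Fin m → Fin o => ¬ lam x = a),
        ∏ y, h y (lam y) = 0 := by
      refine Finset.sum_eq_zero fun lam hlam => ?_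
      rw [Finset.mem_filter] at hlam
      exact Finset.prod_eq_zero (Finset.mem_univ x) (by simp [hh, hlam.2])
    rw [h2, add_zero]
    refine Finset.sum_congr rfl fun lam hlam => Finset.prod_congr rfl fun y _ => ?_
    rw [Finset.mem_filter] at hlam
    by_cases hy : y = x
    · subst hy; simp [hh, hlam.2]
    · simp [hh, hy]
  have key2 : ∑ lam : Fin m → Fin o, ∏ y, h y (lam y) = g x a := by
    rw [← Fintype.prod_sum]
    have hs : ∀ y, ∑ b, h y b = if y = x then g x a else 1 := by
      intro y
      by_cases hy : y = x
      · subst hy; simp [hh]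
      · simp [hh, hy, hg y]
    simp_rw [hs]
    simp
  rw [← key, key2]

lemma jm_of_incoh {d m o : ℕ} {F : Fin m → Fin o → Matrix (Fin d) (Fin d) ℂ}
    (hF : IsAssemblage F) (hI : IsIncoherent F) : JointlyMeasurable F := by
  have hsum : ∀ (y : Fin m) (i : Fin d), ∑ b, F y b i i = 1 := by
    intro y i
    have h2 : (∑ a, F y a) i i = (1 : Matrix (Fin d) (Fin d) ℂ) i i := by rw [hF.2 y]
    simpa [Matrix.sum_apply, Matrix.one_apply_eq] using h2
  refine ⟨fun lam => Matrix.diagonal (fun i => ∏ y, F y (lam y) i i), ?_, ?_, ?_⟩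
  · intro lam
    exact Matrix.posSemidef_diagonal_iff.mpr fun i =>
      Finset.prod_nonneg fun y _ => psd_diag_nonneg (hF.1 y (lam y)) i
  · ext i j
    by_cases h : i = j
    · subst h
      rw [Matrix.sum_apply]
      simp_rw [Matrix.diagonal_apply_eq]
      have hps := Fintype.prod_sum (fun y (b : Fin o) => F y b i i)
      rw [← hps]
      simp [hsum, Matrix.one_apply_eq]
    · simp [Matrix.sum_apply, Matrix.diagonal_apply_ne _ h, Matrix.one_apply_ne h]
  · intro x a
    ext i j
    by_cases h : i = j
    · subst h
      rw [Matrix.sum_apply]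
      simp_rw [Matrix.diagonal_apply_eq]
      exact (scalar_marg (fun y b => F y b i i) (fun y => hsum y i) x a).symm
    · simp [Matrix.sum_apply, Matrix.diagonal_apply_ne _ h, hI x a h]

/-- Hierarchy of measurement resources: the informativeness dominates the coherence,
which dominates the incompatibility. -/
theorem informativeness_ge_coherence_ge_incompatibility {d m o : ℕ}
    (M : Fin m → Fin o → Matrix (Fin d) (Fin d) ℂ) (hM : IsAssemblage M)
    (p : Fin m → ℝ) (hp : IsWeighting p) :
    Coherence p M ≤ Informativeness p M ∧ Incomp p M ≤ Coherence p M := by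
  have hp0 : ∀ x, 0 ≤ p x := fun x => (hp.1 x).le
  constructor
  · by_cases hne : Nonempty {F : Fin m → Fin o → Matrix (Fin d) (Fin d) ℂ //
      IsAssemblage F ∧ IsUninformative F}
    · haveI := hne
      exact le_ciInf fun F => ciInf_le (bdd_Ddiamond p hp0 M _)
        ⟨F.1, F.2.1, incoh_of_uninf F.2.2⟩
    · rw [not_nonempty_iff] at hne
      haveI := hne
      unfold Informativeness
      rw [Real.iInf_of_isEmpty]
      have ho : o = 0 := by
        by_contra h
        have hopos : 0 < o := Nat.pos_of_ne_zero h
        refine hne.false ⟨fun _ _ => ((o:ℝ)⁻¹) • 1, uniform_assemblage hopos,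
          ⟨fun _ _ => (o:ℝ)⁻¹, fun _ _ => by positivity, fun _ => ?_, fun _ _ => rfl⟩⟩
        rw [Finset.sum_const, Finset.card_univ, Fintype.card_fin, nsmul_eq_mul,
          mul_inv_cancel₀ (Nat.cast_ne_zero.mpr hopos.ne')]
      have hm : m ≠ 0 := by
        intro h
        subst h
        exact hne.false ⟨M, hM, ⟨fun x _ => 0, fun x => x.elim0, fun x => x.elim0,
          fun x => x.elim0⟩⟩
      subst ho
      have hd := d_eq_zero_of_o_zero hM (Nat.pos_of_ne_zero hm)
      subst hd
      have hMinc : IsIncoherent M := fun x a i j _ => i.elim0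
      refine le_trans (ciInf_le (bdd_Ddiamond p hp0 M _) ⟨M, hM, hMinc⟩) ?_
      have hz : Ddiamond p M M = 0 := by
        unfold Ddiamond
        haveI : IsEmpty {ρ : Matrix (Fin 0 × Fin 0) (Fin 0 × Fin 0) ℂ // IsDensityMatrix ρ} := by
          constructor
          rintro ⟨ρ, hρ, ht⟩
          rw [Matrix.trace] at ht
          simp at ht
        simp [Real.iSup_of_isEmpty]
      rw [hz]
  · haveI : Nonempty {F : Fin m → Fin o → Matrix (Fin d) (Fin d) ℂ //
      IsAssemblage F ∧ IsIncoherent F} := exists_incoherent hM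
    exact le_ciInf fun F => ciInf_le (bdd_Ddiamond p hp0 M _)
      ⟨F.1, F.2.1, jm_of_incoh F.2.1 F.2.2⟩

end
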